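/- Let A be an m×m real matrix that is the sum of a symmetric M-matrix S (symmetric, positive definite, non-positive off-diagonal entries, entrywise nonnegative inverse) and a nonnegative diagonal matrix D. Then A is invertible and A⁻¹ is entrywise nonnegative. -/

import Mathlib

open Matrix

lemma stieltjes_inv_nonneg (m : ℕ) (A : Matrix (Fin m) (Fin m) ℝ)
    (hA : A.PosDef) (hoff : ∀ i j, i ≠ j → A i j ≤ 0) :
    ∀ i j, 0 ≤ A⁻¹ i j := by
  intro i j
  set x : Fin m → ℝ := fun k => A⁻¹ k j with hxdef
  set p : Fin m → ℝ := fun k => max (x k) 0 with hpdef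
  set n : Fin m → ℝ := fun k => max (-(x k)) 0 with hndef
  have hp : ∀ k, 0 ≤ p k := fun k => le_max_right _ _
  have hn : ∀ k, 0 ≤ n k := fun k => le_max_right _ _
  have hpn : ∀ k, p k * n k = 0 := by
    intro k
    rcases le_total (x k) 0 with h | h
    · have : p k = 0 := max_eq_right h
      rw [this, zero_mul]
    · have : n k = 0 := max_eq_right (by linarith)
      rw [this, mul_zero]
  have hsub : ∀ k, x k = p k - n k := by
    intro k
    rcases le_total (x k) 0 with h | h
    · rw [hpdef, hndef]
      simp only [max_eq_right h, max_eq_left (by linarith : (0:ℝ) ≤ -(x k))]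
      ring
    · rw [hpdef, hndef]
      simp only [max_eq_left h, max_eq_right (by linarith : -(x k) ≤ 0)]
      ring
  have hAx : A.mulVec x = fun k => (1 : Matrix (Fin m) (Fin m) ℝ) k j := by
    funext k
    have h1 : A * A⁻¹ = 1 := mul_nonsing_inv A (isUnit_iff_isUnit_det A |>.mp hA.isUnit)
    calc A.mulVec x k = (A * A⁻¹) k j := by
          simp [Matrix.mulVec, Matrix.mul_apply, dotProduct, hxdef]
      _ = (1 : Matrix (Fin m) (Fin m) ℝ) k j := by rw [h1]
  -- t := n ⬝ᵥ A *ᵥ x is nonnegative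
  have ht : 0 ≤ n ⬝ᵥ A.mulVec x := by
    rw [hAx]
    apply Finset.sum_nonneg
    intro k _
    by_cases hk : k = j
    · subst hk; simpa [Matrix.one_apply] using hn k
    · simp [Matrix.one_apply, hk]
  -- n ⬝ᵥ A *ᵥ p ≤ 0
  have hnp : n ⬝ᵥ A.mulVec p ≤ 0 := by
    unfold dotProduct Matrix.mulVec dotProduct
    apply Finset.sum_nonpos
    intro k _
    rw [Finset.mul_sum]
    apply Finset.sum_nonpos
    intro l _
    by_cases hkl : k = l
    · subst hkl
      have : n k * (A k k * p k) = A k k * (p k * n k) := by ring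
      rw [this, hpn k, mul_zero]
    · have h1 : A k l ≤ 0 := hoff k l hkl
      have := mul_nonneg (hn k) (hp l)
      nlinarith
  have hxeq : x = p - n := by funext k; simp [hsub k]
  have key : n ⬝ᵥ A.mulVec n ≤ 0 := by
    have : n ⬝ᵥ A.mulVec x = n ⬝ᵥ A.mulVec p - n ⬝ᵥ A.mulVec n := by
      rw [hxeq, Matrix.mulVec_sub, dotProduct_sub]
    linarith
  have hn0 : n = 0 := by
    by_contra hne
    have := hA.dotProduct_mulVec_pos hne
    simp only [star_trivial] at this
    linarith
  have : n i = 0 := by rw [hn0]; rfl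
  have : -(x i) ≤ 0 := by
    by_contra h
    push_neg at h
    have : n i = -(x i) := max_eq_left (le_of_lt h)
    rw [hn0] at this
    simp at this
    linarith
  simpa [hxdef] using this

/-- The sum of a symmetric M-matrix and a nonnegative diagonal matrix is invertible
with entrywise nonnegative inverse. -/
theorem M_matrix_plus_diagonal (m : ℕ) (S : Matrix (Fin m) (Fin m) ℝ)
    (hsym : Sᵀ = S) (hpd : S.PosDef) (hoff : ∀ i j, i ≠ j → S i j ≤ 0)
    (hSinv : ∀ i j, 0 ≤ S⁻¹ i j)
    (d : Fin m → ℝ) (hd : ∀ i, 0 ≤ d i) :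
    IsUnit (S + Matrix.diagonal d) ∧ ∀ i j, 0 ≤ (S + Matrix.diagonal d)⁻¹ i j := by
  have hDpsd : (Matrix.diagonal d).PosSemidef := by
    rw [Matrix.posSemidef_diagonal_iff]
    intro i; exact hd i
  have hApd : (S + Matrix.diagonal d).PosDef := hpd.add_posSemidef hDpsd
  refine ⟨hApd.isUnit, ?_⟩
  apply stieltjes_inv_nonneg
  · exact hApd
  · intro i j hij
    have : (Matrix.diagonal d) i j = 0 := Matrix.diagonal_apply_ne d hij
    simp only [Matrix.add_apply, this, add_zero]
    exact hoff i j hij
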